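/- Let n ∈ ℕ and let V ⊆ ℝ^n be a nonempty compact set. For every r ∈ ℕ, C_r^V ⊆ Q_r^V ⊆ COP(V); in particular every kernel in Q_r^V is copositive. -/
import Mathlib


noncomputable section

open Filter Topology

/-- The `r`-stack of a `d`-tensor `T`: `Stk^r(T)(u, w) = T(u)`. -/
def stk {α : Type*} (d r : ℕ) (T : (Fin d → α) → ℝ) : (Fin (d + r) → α) → ℝ :=
  fun v => T fun i => v (Fin.castAdd r i)

/-- The symmetrization of a `d`-tensor:
`σ(T)(v) = (1/d!) ∑_{π ∈ Sym(d)} T(v ∘ π)`. -/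
def tsym {α : Type*} (d : ℕ) (T : (Fin d → α) → ℝ) : (Fin d → α) → ℝ :=
  fun v => (d.factorial : ℝ)⁻¹ * ∑ π : Equiv.Perm (Fin d), T (v ∘ π)

/-- A symmetric two-variable function identified with a `2`-tensor. -/
def kerTensor {X : Type*} (K : X → X → ℝ) : (Fin 2 → X) → ℝ :=
  fun v => K (v 0) (v 1)

/-- A kernel: a continuous symmetric real-valued function of two variables. -/
def IsKernel {X : Type*} [TopologicalSpace X] (K : X → X → ℝ) : Prop :=
  Continuous (fun p : X × X => K p.1 p.2) ∧ ∀ x y, K x y = K y x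

/-- Positive semidefiniteness of a two-variable function. -/
def IsPSDKernel {X : Type*} (K : X → X → ℝ) : Prop :=
  ∀ (k : ℕ) (v : Fin k → X) (x : Fin k → ℝ),
    0 ≤ ∑ i, ∑ j, K (v i) (v j) * x i * x j

/-- Copositivity of a two-variable function. -/
def IsCopositiveKernel {X : Type*} (K : X → X → ℝ) : Prop :=
  ∀ (k : ℕ) (v : Fin k → X) (x : Fin k → ℝ), (∀ i, 0 ≤ x i) →
    0 ≤ ∑ i, ∑ j, K (v i) (v j) * x i * x j

/-- An `(r+2)`-tensor `S` is 2-PSD if it is continuous and every slice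
`(x, y) ↦ S(x, y, z)` is a PSD kernel. -/
def Is2PSD {X : Type*} [TopologicalSpace X] (r : ℕ)
    (S : (Fin (2 + r) → X) → ℝ) : Prop :=
  Continuous S ∧ ∀ z : Fin r → X, IsPSDKernel fun x y => S (Fin.append ![x, y] z)

/-- The tensor condition defining `C_r`: `σ(Stk^r M) = σ(N)` for some
nonnegative `(r+2)`-tensor `N`. -/
def CrCond {X : Type*} (r : ℕ) (M : X → X → ℝ) : Prop :=
  ∃ N : (Fin (2 + r) → X) → ℝ, (∀ v, 0 ≤ N v) ∧
    tsym (2 + r) (stk 2 r (kerTensor M)) = tsym (2 + r) N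

/-- Membership in `C_r`: a kernel satisfying the `C_r` tensor condition. -/
def memCr {X : Type*} [TopologicalSpace X] (r : ℕ) (M : X → X → ℝ) : Prop :=
  IsKernel M ∧ CrCond r M

/-- Membership in `Q_r`: a kernel `M` with `σ(Stk^r M) = σ(N) + σ(S)` for some
nonnegative `(r+2)`-tensor `N` and 2-PSD `(r+2)`-tensor `S`. -/
def memQr {X : Type*} [TopologicalSpace X] (r : ℕ) (M : X → X → ℝ) : Prop :=
  IsKernel M ∧ ∃ N S : (Fin (2 + r) → X) → ℝ, (∀ v, 0 ≤ N v) ∧ Is2PSD r S ∧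
    tsym (2 + r) (stk 2 r (kerTensor M)) =
      fun v => tsym (2 + r) N v + tsym (2 + r) S v

/-- The space of kernels on `V`, i.e. symmetric continuous functions on
`V × V`, with the topology of `C(V × V, ℝ)` (for `V` compact this is the
supremum-norm topology). -/
def KernelSpace {n : ℕ} (V : Set (Fin n → ℝ)) : Type _ :=
  {K : C(↥V × ↥V, ℝ) // ∀ x y, K (x, y) = K (y, x)}

instance {n : ℕ} (V : Set (Fin n → ℝ)) : TopologicalSpace (KernelSpace V) :=
  instTopologicalSpaceSubtype

/-- `COP(V)` as a subset of the space of kernels on `V`. -/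
def COPSet {n : ℕ} (V : Set (Fin n → ℝ)) : Set (KernelSpace V) :=
  {K | IsCopositiveKernel fun x y => K.1 (x, y)}

def Phi {X : Type*} (d k : ℕ) (v : Fin k → X) (x : Fin k → ℝ)
    (T : (Fin d → X) → ℝ) : ℝ :=
  ∑ f : Fin d → Fin k, (∏ m, x (f m)) * T (fun m => v (f m))

lemma phi_tsym {X : Type*} (d k : ℕ) (v : Fin k → X) (x : Fin k → ℝ)
    (T : (Fin d → X) → ℝ) : Phi d k v x (tsym d T) = Phi d k v x T := by
  unfold Phi tsym
  have key : ∀ π : Equiv.Perm (Fin d),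
      (∑ f : Fin d → Fin k, (∏ m, x (f m)) * T (fun m => v (f (π m))))
      = ∑ f : Fin d → Fin k, (∏ m, x (f m)) * T (fun m => v (f m)) := by
    intro π
    apply Fintype.sum_equiv (Equiv.arrowCongr π.symm (Equiv.refl (Fin k)))
    intro f
    have hp : (∏ m, x (f (π m))) = ∏ m, x (f m) := Equiv.prod_comp π (fun m => x (f m))
    simp [Equiv.arrowCongr, hp]
  have expand : ∀ f : Fin d → Fin k,
      (∏ m, x (f m)) *
        ((d.factorial : ℝ)⁻¹ * ∑ π : Equiv.Perm (Fin d), T ((fun m => v (f m)) ∘ π))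
      = ∑ π : Equiv.Perm (Fin d),
          (d.factorial : ℝ)⁻¹ * ((∏ m, x (f m)) * T (fun m => v (f (π m)))) := by
    intro f
    rw [Finset.mul_sum, Finset.mul_sum]
    apply Finset.sum_congr rfl
    intro π _
    show _ * (_ * T fun m => v (f (π m))) = _
    ring
  rw [Finset.sum_congr rfl (fun f _ => expand f), Finset.sum_comm]
  simp_rw [← Finset.mul_sum]
  have h2 : (∑ π : Equiv.Perm (Fin d), ∑ f : Fin d → Fin k,
      (∏ m, x (f m)) * T fun m => v (f (π m)))
      = (d.factorial : ℝ) * ∑ f : Fin d → Fin k, (∏ m, x (f m)) * T fun m => v (f m) := by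
    rw [Finset.sum_congr rfl (fun π _ => key π), Finset.sum_const, Finset.card_univ,
      Fintype.card_perm, Fintype.card_fin, nsmul_eq_mul]
  rw [h2, ← mul_assoc, inv_mul_cancel₀, one_mul]
  exact_mod_cast (Nat.factorial_pos d).ne'

def splitEquiv (r k : ℕ) : (Fin (2 + r) → Fin k) ≃ (Fin 2 → Fin k) × (Fin r → Fin k) :=
  (Equiv.arrowCongr finSumFinEquiv.symm (Equiv.refl (Fin k))).trans
    (Equiv.sumArrowEquivProdArrow _ _ _)

lemma splitEquiv_fst (r k : ℕ) (f : Fin (2 + r) → Fin k) (i : Fin 2) :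
    (splitEquiv r k f).1 i = f (Fin.castAdd r i) := by
  simp [splitEquiv, Equiv.sumArrowEquivProdArrow, Equiv.arrowCongr]

lemma splitEquiv_snd (r k : ℕ) (f : Fin (2 + r) → Fin k) (j : Fin r) :
    (splitEquiv r k f).2 j = f (Fin.natAdd 2 j) := by
  simp [splitEquiv, Equiv.sumArrowEquivProdArrow, Equiv.arrowCongr]

lemma phi_split {X : Type*} (r k : ℕ) (v : Fin k → X) (x : Fin k → ℝ)
    (T : (Fin (2 + r) → X) → ℝ) :
    Phi (2 + r) k v x T = ∑ g : Fin 2 → Fin k, ∑ h : Fin r → Fin k,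
      ((∏ i, x (g i)) * (∏ j, x (h j))) *
        T (Fin.append ![v (g 0), v (g 1)] (fun j => v (h j))) := by
  have h1 : Phi (2 + r) k v x T = ∑ p : (Fin 2 → Fin k) × (Fin r → Fin k),
      ((∏ i, x (p.1 i)) * (∏ j, x (p.2 j))) *
        T (Fin.append ![v (p.1 0), v (p.1 1)] (fun j => v (p.2 j))) := by
    unfold Phi
    apply Fintype.sum_equiv (splitEquiv r k)
    intro f
    have happ : (fun m => v (f m)) =
        Fin.append ![v (f (Fin.castAdd r 0)), v (f (Fin.castAdd r 1))]
          (fun j => v (f (Fin.natAdd 2 j))) := by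
      funext m
      induction m using Fin.addCases with
      | left i =>
        rw [Fin.append_left]
        fin_cases i <;> simp
      | right j =>
        rw [Fin.append_right]
    rw [Fin.prod_univ_add (f := fun m => x (f m))]
    simp only [splitEquiv_fst, splitEquiv_snd]
    rw [happ]
  rw [h1, Fintype.sum_prod_type]

lemma sum2 {X : Type*} (k : ℕ) (v : Fin k → X) (x : Fin k → ℝ) (K : X → X → ℝ) :
    ∑ g : Fin 2 → Fin k, (∏ i, x (g i)) * K (v (g 0)) (v (g 1))
      = ∑ i, ∑ j, K (v i) (v j) * x i * x j := by
  rw [← Fintype.sum_prod_type (f := fun p : Fin k × Fin k => K (v p.1) (v p.2) * x p.1 * x p.2)]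
  apply Fintype.sum_equiv (finTwoArrowEquiv (Fin k))
  intro g
  simp [finTwoArrowEquiv, Fin.prod_univ_two]
  ring

lemma sumr {k : ℕ} (r : ℕ) (x : Fin k → ℝ) :
    ∑ h : Fin r → Fin k, ∏ j, x (h j) = (∑ i, x i) ^ r := by
  have h : (∑ i, x i) ^ r = ∏ _j : Fin r, ∑ i, x i := by
    rw [Finset.prod_const, Finset.card_univ, Fintype.card_fin]
  rw [h, Finset.prod_univ_sum, Fintype.piFinset_univ]

lemma phi_stk {X : Type*} (r k : ℕ) (v : Fin k → X) (x : Fin k → ℝ) (M : X → X → ℝ) :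
    Phi (2 + r) k v x (stk 2 r (kerTensor M))
      = (∑ i, ∑ j, M (v i) (v j) * x i * x j) * (∑ i, x i) ^ r := by
  rw [phi_split]
  have hT : ∀ (a b : X) (z : Fin r → X),
      stk 2 r (kerTensor M) (Fin.append ![a, b] z) = M a b := by
    intro a b z
    unfold stk kerTensor
    simp [Fin.append_left]
  calc ∑ g : Fin 2 → Fin k, ∑ h : Fin r → Fin k,
        ((∏ i, x (g i)) * (∏ j, x (h j))) *
          stk 2 r (kerTensor M) (Fin.append ![v (g 0), v (g 1)] (fun j => v (h j)))
      = ∑ g : Fin 2 → Fin k, ((∏ i, x (g i)) * M (v (g 0)) (v (g 1)))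
          * ∑ h : Fin r → Fin k, ∏ j, x (h j) := by
        apply Finset.sum_congr rfl
        intro g _
        rw [Finset.mul_sum]
        apply Finset.sum_congr rfl
        intro h _
        rw [hT]
        ring
    _ = _ := by rw [← Finset.sum_mul, sum2, sumr]

lemma phi_nonneg {X : Type*} (d k : ℕ) (v : Fin k → X) (x : Fin k → ℝ)
    (hx : ∀ i, 0 ≤ x i) (N : (Fin d → X) → ℝ) (hN : ∀ w, 0 ≤ N w) :
    0 ≤ Phi d k v x N := by
  apply Finset.sum_nonneg
  intro f _
  exact mul_nonneg (Finset.prod_nonneg fun m _ => hx _) (hN _)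

lemma phi_2psd {X : Type*} [TopologicalSpace X] (r k : ℕ) (v : Fin k → X)
    (x : Fin k → ℝ) (hx : ∀ i, 0 ≤ x i) (S : (Fin (2 + r) → X) → ℝ)
    (hS : Is2PSD r S) : 0 ≤ Phi (2 + r) k v x S := by
  rw [phi_split, Finset.sum_comm]
  apply Finset.sum_nonneg
  intro h _
  have step : (∑ g : Fin 2 → Fin k, ((∏ i, x (g i)) * (∏ j, x (h j))) *
        S (Fin.append ![v (g 0), v (g 1)] fun j => v (h j)))
      = (∏ j, x (h j)) * ∑ i, ∑ j,
          (fun a b => S (Fin.append ![a, b] fun j => v (h j))) (v i) (v j) * x i * x j := by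
    rw [← sum2 k v x (fun a b => S (Fin.append ![a, b] fun j => v (h j))), Finset.mul_sum]
    apply Finset.sum_congr rfl
    intro g _
    ring
  rw [step]
  exact mul_nonneg (Finset.prod_nonneg fun j _ => hx _) (hS.2 _ k v x)


/-- `C_r^V ⊆ Q_r^V ⊆ COP(V)`; in particular every kernel in
`Q_r^V` is copositive. -/
theorem stmt5 (n : ℕ) (V : Set (Fin n → ℝ)) (hVne : V.Nonempty)
    (hVc : IsCompact V) (r : ℕ) :
    (∀ M : ↥V → ↥V → ℝ, memCr r M → memQr r M) ∧
    (∀ M : ↥V → ↥V → ℝ, memQr r M → IsKernel M ∧ IsCopositiveKernel M) := by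
  constructor
  · rintro M ⟨hK, N, hN, heq⟩
    refine ⟨hK, N, fun _ => 0, hN, ⟨continuous_const, fun z k v x => by simp⟩, ?_⟩
    funext w
    rw [heq]
    simp [tsym]
  · rintro M ⟨hK, N, S, hN, hS, heq⟩
    refine ⟨hK, ?_⟩
    intro k v x hx
    have hphi := congrArg (Phi (2 + r) k v x) heq
    rw [phi_tsym] at hphi
    have hadd : Phi (2 + r) k v x (fun w => tsym (2 + r) N w + tsym (2 + r) S w)
        = Phi (2 + r) k v x (tsym (2 + r) N) + Phi (2 + r) k v x (tsym (2 + r) S) := by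
      unfold Phi
      simp [mul_add, Finset.sum_add_distrib]
    rw [hadd, phi_tsym, phi_tsym, phi_stk] at hphi
    have hge : 0 ≤ (∑ i, ∑ j, M (v i) (v j) * x i * x j) * (∑ i, x i) ^ r := by
      rw [hphi]
      exact add_nonneg (phi_nonneg _ _ _ _ hx N hN) (phi_2psd r k v x hx S hS)
    rcases eq_or_lt_of_le (Finset.sum_nonneg fun i _ => hx i) with hs | hs
    · have hz : ∀ i ∈ Finset.univ, x i = 0 :=
        (Finset.sum_eq_zero_iff_of_nonneg fun i _ => hx i).mp hs.symm
      have hzero : (∑ i, ∑ j, M (v i) (v j) * x i * x j) = 0 :=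
        Finset.sum_eq_zero fun i _ => Finset.sum_eq_zero fun j _ => by
          rw [hz j (Finset.mem_univ j), mul_zero]
      exact le_of_eq hzero.symm
    · have hp : 0 < (∑ i, x i) ^ r := pow_pos hs r
      nlinarith [hge, hp]

end
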